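/- Let f, g : ℂⁿ → ℂ be holomorphic germs at 0 with f(0)=g(0)=0 and g ≢ 0, let k = ord₀ g, let φ : (ℂⁿ,0) → (ℂⁿ,0) and φ̂ : (ℂ,0) → (ℂ,0) be maps with f = φ̂ ∘ g ∘ φ. Assume φ has a pseudo-derivative dφ at 0 with respect to a sequence T = {t_j} ⊂ (0,∞) with t_j → 0, and φ̂ has a pseudo-derivative dφ̂ at 0 with respect to T' = {t_jᵏ}. If dφ and dφ̂ are homeomorphisms, then for all v ∈ ℂⁿ the limit lim_{j→∞} (φ̂ ∘ g ∘ φ)(t_j v)/t_jᵏ exists and equals dφ̂(g_*(dφ(v))). -/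

import Mathlib

open Filter Topology

/-- Let `f = φ̂ ∘ g ∘ φ` with `f, g` holomorphic germs at `0` vanishing at `0`,
`g ≢ 0` of order `k` (expressed via a power series `q` of `g` with vanishing diagonal parts
below degree `k` and nonzero diagonal part `g_*` in degree `k`). Suppose `φ` has a
pseudo-derivative `dφ` at `0` w.r.t. a sequence `t_j → 0⁺` and `φ̂` has a pseudo-derivative
`dφ̂` at `0` w.r.t. `t_jᵏ`, and `dφ`, `dφ̂` are homeomorphisms. Then for every `v`,
`(φ̂ ∘ g ∘ φ)(t_j • v) / t_jᵏ → dφ̂ (g_* (dφ v))` as `j → ∞`. -/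
theorem pseudo_derivative_comp_limit (n k : ℕ) (f g : (Fin n → ℂ) → ℂ)
    (hf : AnalyticAt ℂ f 0) (hf0 : f 0 = 0) (hg0 : g 0 = 0)
    (q : FormalMultilinearSeries ℂ (Fin n → ℂ) ℂ) (hq : HasFPowerSeriesAt g q 0)
    (hqlow : ∀ j < k, ∀ v : Fin n → ℂ, q j (fun _ => v) = 0)
    (hqk : (fun v : Fin n → ℂ => q k (fun _ => v)) ≠ 0)
    (φ : (Fin n → ℂ) → Fin n → ℂ) (hφ0 : φ 0 = 0) (hφc : ContinuousAt φ 0)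
    (φh : ℂ → ℂ) (hφh0 : φh 0 = 0) (hφhc : ContinuousAt φh 0)
    (hcomp : ∀ x, f x = φh (g (φ x)))
    (t : ℕ → ℝ) (ht : ∀ j, 0 < t j) (htlim : Tendsto t atTop (𝓝 0))
    (dφ : (Fin n → ℂ) → Fin n → ℂ) (dφh : ℂ → ℂ)
    (hdφ : ∀ K : Set (Fin n → ℂ), IsCompact K →
      TendstoUniformlyOn (fun j v => (t j)⁻¹ • φ (t j • v)) dφ atTop K)
    (hdφh : ∀ K : Set ℂ, IsCompact K →
      TendstoUniformlyOn (fun j z => ((t j) ^ k)⁻¹ • φh ((t j) ^ k • z)) dφh atTop K)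
    (hdφhom : IsHomeomorph dφ) (hdφhhom : IsHomeomorph dφh) :
    ∀ v : Fin n → ℂ,
      Tendsto (fun j : ℕ => φh (g (φ (t j • v))) / (t j : ℂ) ^ k) atTop
        (𝓝 (dφh (q k (fun _ => dφ v)))) := by
  intro v
  have hts : ∀ j, (t j : ℂ) ≠ 0 := fun j => by exact_mod_cast (ht j).ne'
  -- real smul on ℂⁿ and ℂ is complex smul of the coercion
  have hsmul : ∀ (r : ℝ) (x : Fin n → ℂ), r • x = (r : ℂ) • x := by
    intro r x; funext i; simp [Complex.real_smul]
  set w : Fin n → ℂ := dφ v with hw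
  set wj : ℕ → Fin n → ℂ := fun j => (t j)⁻¹ • φ (t j • v) with hwj
  have hw_tend : Tendsto wj atTop (𝓝 w) :=
    (hdφ {v} isCompact_singleton).tendsto_at rfl
  have hu : ∀ j, φ (t j • v) = t j • wj j := fun j => by
    simp [hwj, smul_smul, mul_inv_cancel₀ (ht j).ne']
  -- u j → 0
  have hu0 : Tendsto (fun j => φ (t j • v)) atTop (𝓝 0) := by
    have h1 : Tendsto (fun j => t j • v) atTop (𝓝 0) := by
      simpa using htlim.smul_const v
    simpa [hφ0, Function.comp_def] using hφc.tendsto.comp h1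
  -- partial sums collapse
  have hps : ∀ y : Fin n → ℂ, q.partialSum (k+1) y = q k (fun _ => y) := by
    intro y
    rw [FormalMultilinearSeries.partialSum, Finset.sum_range_succ,
      Finset.sum_eq_zero fun m hm => hqlow m (Finset.mem_range.1 hm) y, zero_add]
  -- diagonal scaling
  have hdiag : ∀ (c : ℂ) (y : Fin n → ℂ),
      q k (fun _ => c • y) = c ^ k * q k (fun _ => y) := by
    intro c y
    have := (q k).map_smul_univ (fun _ : Fin k => c) (fun _ => y)
    simpa [Finset.prod_const] using this
  -- big-O remainder bound
  obtain ⟨C, hC⟩ := ((hq.isBigO_sub_partialSum_pow (k+1)).bound)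
  rw [Metric.eventually_nhds_iff] at hC
  obtain ⟨ε, hε, hCb⟩ := hC
  set z0 : ℂ := q k (fun _ => w) with hz0
  set z : ℕ → ℂ := fun j => g (φ (t j • v)) / (t j : ℂ) ^ k with hz
  -- z j → z0
  have hz_tend : Tendsto z atTop (𝓝 z0) := by
    have hqkcont : Continuous fun y : Fin n → ℂ => q k (fun _ => y) :=
      (q k).cont.comp (continuous_pi fun _ => continuous_id)
    have h2 : Tendsto (fun j => q k (fun _ => wj j)) atTop (𝓝 z0) :=
      hqkcont.continuousAt.tendsto.comp hw_tend
    have h3 : Tendsto (fun j => z j - q k (fun _ => wj j)) atTop (𝓝 0) := by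
      have hB : Tendsto (fun j => C * t j * ‖wj j‖ ^ (k+1)) atTop (𝓝 0) := by
        have := ((tendsto_const_nhds (x := C)).mul htlim).mul ((hw_tend.norm).pow (k+1))
        simpa using this
      refine squeeze_zero_norm' ?_ hB
      have hmem : ∀ᶠ j in atTop, dist (φ (t j • v)) 0 < ε :=
        hu0 (Metric.ball_mem_nhds 0 hε)
      filter_upwards [hmem] with j hj
      have hb := hCb hj
      simp only [zero_add] at hb
      rw [hps, Real.norm_of_nonneg (by positivity)] at hb
      have hqe : q k (fun _ => φ (t j • v)) = (t j : ℂ)^k * q k (fun _ => wj j) := by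
        rw [hu j, hsmul, hdiag]
      have hzz : z j - q k (fun _ => wj j)
          = (g (φ (t j • v)) - q k (fun _ => φ (t j • v))) / (t j : ℂ) ^ k := by
        rw [hqe, hz]
        rw [sub_div, mul_comm, mul_div_assoc, div_self (pow_ne_zero _ (hts j)), mul_one]
      have hnc : ‖(t j : ℂ) ^ k‖ = t j ^ k := by
        rw [norm_pow, Complex.norm_real, Real.norm_of_nonneg (ht j).le]
      have hnorm : ‖φ (t j • v)‖ = t j * ‖wj j‖ := by
        rw [hu j, norm_smul, Real.norm_of_nonneg (ht j).le]
      rw [hzz, norm_div, hnc, div_le_iff₀ (pow_pos (ht j) k)]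
      calc ‖g (φ (t j • v)) - q k (fun _ => φ (t j • v))‖
          ≤ C * ‖φ (t j • v)‖ ^ (k+1) := hb
        _ = C * t j * ‖wj j‖ ^ (k+1) * t j ^ k := by rw [hnorm]; ring
    have := h3.add h2
    simpa using this
  -- final step: compose with rescaled φh
  have hzin : ∀ᶠ j in atTop, z j ∈ Metric.closedBall z0 1 :=
    hz_tend (Metric.closedBall_mem_nhds z0 one_pos)
  have hfinal := (hdφh (Metric.closedBall z0 1) (isCompact_closedBall z0 1)).tendsto_comp
    (hdφhhom.continuous.continuousWithinAt)
    (tendsto_nhdsWithin_of_tendsto_nhds_of_eventually_within z hz_tend hzin)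
  refine hfinal.congr fun j => ?_
  have h1 : (t j) ^ k • z j = g (φ (t j • v)) := by
    rw [Complex.real_smul, hz]
    push_cast
    field_simp
    exact mul_div_cancel_left₀ _ (pow_ne_zero k (hts j))
  rw [h1, Complex.real_smul]
  push_cast
  rw [inv_mul_eq_div]
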